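/- Let v : ℝⁿ → ℝ be Lipschitz continuous with Lipschitz constant L, and suppose v is a viscosity subsolution of −Δ∞v = 1 on an open set U ⊆ ℝⁿ. For ε > 0, define the sup-convolution v^ε(x) := sup_{y ∈ ℝⁿ} ( v(y) − |x−y|²/(2ε) ). Then v^ε is a viscosity subsolution of −Δ∞w = 1 on the open set A := {x ∈ U : dist(x, ℝⁿ∖U) > 2εL}. -/

import Mathlib

open Set Metric Filter MeasureTheory
open scoped RealInnerProductSpace Topology NNReal

noncomputable section

abbrev Euc (n : ℕ) := EuclideanSpace ℝ (Fin n)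

def infLap {n : ℕ} (φ : Euc n → ℝ) (x : Euc n) : ℝ :=
  ⟪fderiv ℝ (gradient φ) x (gradient φ x), gradient φ x⟫

def IsViscSubsol {n : ℕ} (Ω : Set (Euc n)) (f : Euc n → ℝ → ℝ) (u : Euc n → ℝ) : Prop :=
  ContinuousOn u Ω ∧
  ∀ x₀ ∈ Ω, ∀ φ : Euc n → ℝ, ContDiff ℝ 2 φ →
    IsLocalMaxOn (fun x => u x - φ x) Ω x₀ → -infLap φ x₀ - f x₀ (u x₀) ≤ 0

def IsViscSupersol {n : ℕ} (Ω : Set (Euc n)) (f : Euc n → ℝ → ℝ) (u : Euc n → ℝ) : Prop :=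
  ContinuousOn u Ω ∧
  ∀ x₀ ∈ Ω, ∀ φ : Euc n → ℝ, ContDiff ℝ 2 φ →
    IsLocalMinOn (fun x => u x - φ x) Ω x₀ → 0 ≤ -infLap φ x₀ - f x₀ (u x₀)

def IsDirichletSol {n : ℕ} (Ω : Set (Euc n)) (u : Euc n → ℝ) : Prop :=
  ContinuousOn u (closure Ω) ∧ (∀ x ∈ frontier Ω, u x = 0) ∧
  IsViscSubsol Ω (fun _ _ => 1) u ∧ IsViscSupersol Ω (fun _ _ => 1) u

def IntSphereCond {n : ℕ} (Ω : Set (Euc n)) : Prop :=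
  ∀ y ∈ frontier Ω, ∃ z : Euc n, ∃ R : ℝ, 0 < R ∧ ball z R ⊆ Ω ∧ y ∈ sphere z R

section aux

variable {E F : Type*} [NormedAddCommGroup E] [NormedSpace ℝ E]
  [NormedAddCommGroup F] [NormedSpace ℝ F]

lemma hasFDerivAt_comp_add_right' {f : E → F} {f' : E →L[ℝ] F} {c x : E}
    (h : HasFDerivAt f f' (x + c)) : HasFDerivAt (fun y => f (y + c)) f' x := by
  have h2 : HasFDerivAt (fun y : E => y + c) (ContinuousLinearMap.id ℝ E) x :=
    (hasFDerivAt_id x).add_const c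
  simpa [Function.comp_def] using h.comp x h2

lemma fderiv_comp_add_right' (f : E → F) (c x : E) :
    fderiv ℝ (fun y => f (y + c)) x = fderiv ℝ f (x + c) := by
  by_cases h : DifferentiableAt ℝ f (x + c)
  · exact (hasFDerivAt_comp_add_right' h.hasFDerivAt).fderiv
  · rw [fderiv_zero_of_not_differentiableAt h, fderiv_zero_of_not_differentiableAt]
    intro h2
    apply h
    have h3 := (hasFDerivAt_comp_add_right' (c := -c) (x := x + c)
        (by simpa using h2.hasFDerivAt)).differentiableAt
    simpa using h3

lemma gradient_comp_add_right' {n : ℕ} (f : Euc n → ℝ) (c x : Euc n) :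
    gradient (fun y => f (y + c)) x = gradient f (x + c) := by
  unfold gradient
  rw [fderiv_comp_add_right']

lemma infLap_comp_add_right {n : ℕ} (f : Euc n → ℝ) (c x : Euc n) :
    infLap (fun y => f (y + c)) x = infLap f (x + c) := by
  have hg : gradient (fun y => f (y + c)) = fun y => gradient f (y + c) :=
    funext fun y => gradient_comp_add_right' f c y
  unfold infLap
  rw [hg, fderiv_comp_add_right' (gradient f) c x]

end aux

theorem stmt13 {n : ℕ} (U : Set (Euc n)) (hU : IsOpen U)
    (L : ℝ≥0) (v : Euc n → ℝ) (hLip : LipschitzWith L v)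
    (hsub : IsViscSubsol U (fun _ _ => 1) v)
    (ε : ℝ) (hε : 0 < ε)
    (vε : Euc n → ℝ)
    (hvε : ∀ x, vε x = ⨆ y : Euc n, (v y - ‖x - y‖ ^ 2 / (2 * ε))) :
    IsViscSubsol {x ∈ U | 2 * ε * (L : ℝ) < infDist x Uᶜ} (fun _ _ => 1) vε := by
  have hL0 : (0:ℝ) ≤ L := L.coe_nonneg
  have h2ε : (0:ℝ) < 2 * ε := by positivity
  have hvlip : ∀ a b : Euc n, v a - v b ≤ L * ‖a - b‖ := by
    intro a b
    have h := hLip.dist_le_mul a b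
    rw [Real.dist_eq, dist_eq_norm] at h
    linarith [le_abs_self (v a - v b)]
  have hdiv : ∀ t : ℝ, (L : ℝ) * t - t ^ 2 / (2 * ε) ≤ ε * L ^ 2 / 2 := by
    intro t
    rw [sub_le_iff_le_add, ← sub_le_iff_le_add', le_div_iff₀ h2ε]
    nlinarith [sq_nonneg (t - ε * L)]
  have hneg : ∀ t : ℝ, 2 * ε * (L : ℝ) < t → (L : ℝ) * t - t ^ 2 / (2 * ε) ≤ 0 := by
    intro t ht
    have ht0 : 0 < t := lt_of_le_of_lt (by positivity) ht
    rw [sub_nonpos, le_div_iff₀ h2ε]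
    nlinarith [mul_lt_mul_of_pos_left ht ht0]
  have hbdd : ∀ x y : Euc n, v y - ‖x - y‖ ^ 2 / (2 * ε) ≤ v x + ε * L ^ 2 / 2 := by
    intro x y
    have h1 : v y - v x ≤ L * ‖y - x‖ := hvlip y x
    rw [← norm_sub_rev x y] at h1
    linarith [hdiv ‖x - y‖]
  have hBdd : ∀ x : Euc n, BddAbove (Set.range fun y => v y - ‖x - y‖ ^ 2 / (2 * ε)) := by
    intro x
    exact ⟨v x + ε * L ^ 2 / 2, by rintro _ ⟨y, rfl⟩; exact hbdd x y⟩
  -- existence of a maximizer within distance 2εL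
  have hmaxer : ∀ x : Euc n, ∃ y₀ : Euc n, ‖x - y₀‖ ≤ 2 * ε * L ∧
      (∀ y, v y - ‖x - y‖ ^ 2 / (2 * ε) ≤ v y₀ - ‖x - y₀‖ ^ 2 / (2 * ε)) ∧
      vε x = v y₀ - ‖x - y₀‖ ^ 2 / (2 * ε) := by
    intro x
    have hfc : Continuous fun y : Euc n => v y - ‖x - y‖ ^ 2 / (2 * ε) := by
      apply hLip.continuous.sub
      exact ((continuous_const.sub continuous_id).norm.pow 2).div_const _
    have hr0 : (0:ℝ) ≤ 2 * ε * L := by positivity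
    obtain ⟨y₀, hy₀mem, hy₀max⟩ := (isCompact_closedBall x (2 * ε * L)).exists_isMaxOn
      ⟨x, mem_closedBall_self hr0⟩ hfc.continuousOn
    have hle : ∀ y, v y - ‖x - y‖ ^ 2 / (2 * ε) ≤ v y₀ - ‖x - y₀‖ ^ 2 / (2 * ε) := by
      intro y
      by_cases hy : y ∈ closedBall x (2 * ε * L)
      · exact hy₀max hy
      · have ht : 2 * ε * (L:ℝ) < ‖x - y‖ := by
          rw [mem_closedBall, dist_comm, dist_eq_norm, not_le] at hy
          exact hy
        have h1 : v y - v x ≤ L * ‖y - x‖ := hvlip y x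
        rw [← norm_sub_rev x y] at h1
        have hfx : v y - ‖x - y‖ ^ 2 / (2 * ε) ≤ v x - ‖x - x‖ ^ 2 / (2 * ε) := by
          have hxx : ‖x - x‖ = 0 := by simp
          rw [hxx]
          have := hneg ‖x - y‖ ht
          norm_num
          linarith
        exact hfx.trans (hy₀max (mem_closedBall_self hr0))
    refine ⟨y₀, ?_, hle, ?_⟩
    · rw [mem_closedBall, dist_comm, dist_eq_norm] at hy₀mem
      exact hy₀mem
    · rw [hvε x]
      exact le_antisymm (ciSup_le hle) (le_ciSup (hBdd x) y₀)
  -- vε is Lipschitz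
  have hkey : ∀ a b : Euc n, vε a ≤ vε b + L * dist a b := by
    intro a b
    rw [hvε a]
    apply ciSup_le
    intro y
    have h3 : ‖b - (y - a + b)‖ = ‖a - y‖ := by rw [show b - (y - a + b) = a - y by abel]
    have h2 : v y - v (y - a + b) ≤ L * dist a b := by
      have h := hvlip y (y - a + b)
      rwa [show y - (y - a + b) = a - b by abel, ← dist_eq_norm] at h
    have h5 : v (y - a + b) - ‖b - (y - a + b)‖ ^ 2 / (2 * ε) ≤ vε b := by
      rw [hvε b]; exact le_ciSup (hBdd b) (y - a + b)
    rw [h3] at h5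
    linarith
  have hLipvε : LipschitzWith L vε := by
    apply LipschitzWith.of_dist_le_mul
    intro a b
    rw [Real.dist_eq, abs_sub_le_iff]
    constructor
    · linarith [hkey a b]
    · have h := hkey b a
      rw [dist_comm] at h
      linarith
  constructor
  · exact hLipvε.continuous.continuousOn
  · rintro x₀ hx₀ φ hφ hmax
    obtain ⟨hx₀U, hx₀d⟩ := hx₀
    obtain ⟨y₀, hy₀dist, hy₀max, hy₀eq⟩ := hmaxer x₀
    have hy₀U : y₀ ∈ U := by
      by_contra h
      have h1 : infDist x₀ Uᶜ ≤ dist x₀ y₀ := infDist_le_dist_of_mem h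
      rw [dist_eq_norm] at h1
      linarith
    have hAopen : IsOpen {x ∈ U | 2 * ε * (L : ℝ) < infDist x Uᶜ} := by
      have heq : {x ∈ U | 2 * ε * (L : ℝ) < infDist x Uᶜ}
          = U ∩ (fun x => infDist x Uᶜ) ⁻¹' (Ioi (2 * ε * L)) := by
        ext z; simp [Set.mem_sep_iff]
      rw [heq]
      exact hU.inter (isOpen_Ioi.preimage (continuous_infDist_pt _))
    have hmemA : {x ∈ U | 2 * ε * (L : ℝ) < infDist x Uᶜ} ∈ 𝓝 x₀ :=
      hAopen.mem_nhds ⟨hx₀U, hx₀d⟩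
    have hmax' : ∀ᶠ x in 𝓝 x₀, vε x - φ x ≤ vε x₀ - φ x₀ := by
      rw [← nhdsWithin_eq_nhds.2 hmemA]
      exact hmax
    obtain ⟨r, hr, hball⟩ := Metric.eventually_nhds_iff_ball.mp hmax'
    set c := x₀ - y₀ with hc
    have hy₀c : y₀ + c = x₀ := by rw [hc]; abel
    set ψ : Euc n → ℝ := fun y => φ (y + c) with hψ
    have hψC : ContDiff ℝ 2 ψ := hφ.comp (contDiff_id.add contDiff_const)
    have hloc : IsLocalMaxOn (fun y => v y - ψ y) U y₀ := by
      apply Filter.Eventually.filter_mono nhdsWithin_le_nhds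
      rw [Metric.eventually_nhds_iff_ball]
      refine ⟨r, hr, fun y hy => ?_⟩
      have hxball : y + c ∈ ball x₀ r := by
        rw [mem_ball, dist_eq_norm] at hy ⊢
        rw [show y + c - x₀ = y - y₀ by rw [hc]; abel]
        exact hy
      have h1 : v y - ‖(y + c) - y‖ ^ 2 / (2 * ε) ≤ vε (y + c) := by
        rw [hvε (y + c)]; exact le_ciSup (hBdd (y + c)) y
      have h2 : vε (y + c) - φ (y + c) ≤ vε x₀ - φ x₀ := hball (y + c) hxball
      have h3 : ‖(y + c) - y‖ = ‖x₀ - y₀‖ := by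
        rw [show y + c - y = x₀ - y₀ by rw [hc]; abel]
      have hψy₀ : ψ y₀ = φ x₀ := by rw [hψ]; simp only [hy₀c]
      rw [h3] at h1
      show v y - ψ y ≤ v y₀ - ψ y₀
      rw [hψy₀]
      have h4 : ψ y = φ (y + c) := rfl
      rw [h4]
      linarith
    have hres := hsub.2 y₀ hy₀U ψ hψC hloc
    have hlap : infLap ψ y₀ = infLap φ x₀ := by
      rw [hψ, infLap_comp_add_right φ c y₀, hy₀c]
    rw [hlap] at hres
    exact hres
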